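/- arXiv:2602.16982 — 3 statements merged into one kernel-verified Lean document; each statement's English description precedes it below -/
import Mathlib

section
/- Let λ > 0 be a positive real number and t₀ > 0. If y : [t₀, ∞) → ℝ is twice continuously differentiable and satisfies the modal equation y''(t) + (3/t) y'(t) + λ y(t) = 0 for all t ≥ t₀, then there exists a constant C ≥ 0 such that |y(t)| ≤ C · t^{-3/2} for all t ≥ t₀; in particular y(t) → 0 as t → ∞. -/
open Filter

/-- The modal equation: `y` is a twice continuously differentiable solution with
derivative `y'` of `y'' + (3/t) y' + lam · y = 0` on `[t₀, ∞)`. -/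
def IsModalSolution (lam t₀ : ℝ) (y y' : ℝ → ℝ) : Prop :=
  (∀ t, t₀ ≤ t → HasDerivAt y (y' t) t) ∧
  (∀ t, t₀ ≤ t → HasDerivAt y' (-(3 / t) * y' t - lam * y t) t)

/-- for `lam > 0`, every solution of the modal equation on `[t₀, ∞)` (t₀ > 0)
satisfies `|y(t)| ≤ C t^{-3/2}` for some `C ≥ 0`; in particular `y(t) → 0`. -/
theorem stmt_1 (lam t₀ : ℝ) (hlam : 0 < lam) (ht₀ : 0 < t₀)
    (y y' : ℝ → ℝ) (h : IsModalSolution lam t₀ y y') :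
    (∃ C : ℝ, 0 ≤ C ∧ ∀ t, t₀ ≤ t → |y t| ≤ C * t ^ (-(3 : ℝ) / 2)) ∧
    Tendsto y atTop (nhds 0) := by
  obtain ⟨hy, hy'⟩ := h
  set s : ℝ := Real.sqrt lam with hs_def
  have hs : 0 < s := Real.sqrt_pos.mpr hlam
  have hs2 : s ^ 2 = lam := Real.sq_sqrt hlam.le
  set c : ℝ := 3 / (4 * s) with hc_def
  have hc : 0 < c := by positivity
  set F : ℝ → ℝ := fun t => t ^ 3 * y' t ^ 2 + 3 * t ^ 2 * y t * y' t
      + 9 / 4 * t * y t ^ 2 + lam * t ^ 3 * y t ^ 2 with hF_def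
  set G : ℝ → ℝ := fun t => F t * Real.exp (c / t) with hG_def
  set DG : ℝ → ℝ := fun t =>
      (3 / 2 * t * y t * y' t + 9 / 4 * y t ^ 2) * Real.exp (c / t)
      + F t * (Real.exp (c / t) * (c * -(t ^ 2)⁻¹)) with hDG_def
  -- derivative of F
  have hF : ∀ t, t₀ ≤ t →
      HasDerivAt F (3 / 2 * t * y t * y' t + 9 / 4 * y t ^ 2) t := by
    intro t ht
    have htpos : 0 < t := lt_of_lt_of_le ht₀ ht
    have h1 := hy t ht
    have h2 := hy' t ht
    have dt3 : HasDerivAt (fun x : ℝ => x ^ 3) (3 * t ^ 2) t := by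
      simpa using hasDerivAt_pow 3 t
    have dt2 : HasDerivAt (fun x : ℝ => x ^ 2) (2 * t) t := by
      simpa using hasDerivAt_pow 2 t
    have dy2 : HasDerivAt (fun x => y x ^ 2) (2 * y t * y' t) t := by
      simpa [mul_comm, mul_assoc] using h1.fun_pow 2
    have dy'2 : HasDerivAt (fun x => y' x ^ 2)
        (2 * y' t * (-(3 / t) * y' t - lam * y t)) t := by
      simpa [mul_comm, mul_assoc] using h2.fun_pow 2
    have dA := dt3.mul dy'2
    have dB := ((dt2.const_mul (3:ℝ)).mul h1).mul h2
    have dC := ((hasDerivAt_id t).const_mul (9/4:ℝ)).mul dy2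
    have dD := (dt3.const_mul lam).mul dy2
    have full := ((dA.add dB).add dC).add dD
    convert full using 1
    · rfl
    · rfl
    · rfl
    simp only [Pi.mul_apply, id]
    field_simp
    ring
  -- derivative of G
  have hG : ∀ t, t₀ ≤ t → HasDerivAt G (DG t) t := by
    intro t ht
    have htpos : 0 < t := lt_of_lt_of_le ht₀ ht
    have dinv : HasDerivAt (fun x : ℝ => c / x) (c * -(t ^ 2)⁻¹) t := by
      simpa [div_eq_mul_inv] using (hasDerivAt_inv htpos.ne').const_mul c
    exact (hF t ht).mul dinv.exp
  -- DG is nonpositive on [t₀, ∞)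
  have hDGle : ∀ t, t₀ ≤ t → DG t ≤ 0 := by
    intro t ht
    have htpos : 0 < t := lt_of_lt_of_le ht₀ ht
    have hexp : 0 < Real.exp (c / t) := Real.exp_pos _
    have key : 3 / 2 * t * y t * y' t + 9 / 4 * y t ^ 2 ≤ c * (t ^ 2)⁻¹ * F t := by
      have heq : c * (t ^ 2)⁻¹ * F t = 3 * F t / (4 * s * t ^ 2) := by
        rw [hc_def]; field_simp
      rw [heq, le_div_iff₀ (by positivity)]
      have hq := mul_nonneg htpos.le
        (sq_nonneg (t * (y' t - s * y t) + 3 / 2 * y t))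
      show (3 / 2 * t * y t * y' t + 9 / 4 * y t ^ 2) * (4 * s * t ^ 2) ≤
        3 * (t ^ 3 * y' t ^ 2 + 3 * t ^ 2 * y t * y' t
          + 9 / 4 * t * y t ^ 2 + lam * t ^ 3 * y t ^ 2)
      rw [← hs2]
      nlinarith [hq]
    have : DG t = Real.exp (c / t) *
        ((3 / 2 * t * y t * y' t + 9 / 4 * y t ^ 2) - c * (t ^ 2)⁻¹ * F t) := by
      simp only [hDG_def]; ring
    rw [this]
    exact mul_nonpos_of_nonneg_of_nonpos hexp.le (by linarith)
  -- G is antitone on [t₀, ∞)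
  have hanti : AntitoneOn G (Set.Ici t₀) := by
    apply antitoneOn_of_deriv_nonpos (convex_Ici t₀)
    · exact fun t ht => (hG t ht).continuousAt.continuousWithinAt
    · intro t ht
      rw [interior_Ici] at ht
      exact (hG t (le_of_lt ht)).differentiableAt.differentiableWithinAt
    · intro t ht
      rw [interior_Ici] at ht
      rw [(hG t (le_of_lt ht)).deriv]
      exact hDGle t (le_of_lt ht)
  -- F is nonnegative and dominates lam * t^3 * y^2
  have hFlow : ∀ t, t₀ ≤ t → lam * t ^ 3 * y t ^ 2 ≤ F t := by
    intro t ht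
    have htpos : 0 < t := lt_of_lt_of_le ht₀ ht
    have hq := mul_nonneg htpos.le (sq_nonneg (t * y' t + 3 / 2 * y t))
    show lam * t ^ 3 * y t ^ 2 ≤ t ^ 3 * y' t ^ 2 + 3 * t ^ 2 * y t * y' t
        + 9 / 4 * t * y t ^ 2 + lam * t ^ 3 * y t ^ 2
    nlinarith [hq]
  set K : ℝ := G t₀ with hK_def
  have hK0 : 0 ≤ K := by
    have h1 : 0 ≤ F t₀ :=
      le_trans (mul_nonneg (mul_nonneg hlam.le (pow_pos ht₀ 3).le) (sq_nonneg (y t₀)))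
        (hFlow t₀ le_rfl)
    exact mul_nonneg h1 (Real.exp_pos _).le
  -- main pointwise bound : lam * t^3 * y^2 ≤ K
  have hmain : ∀ t, t₀ ≤ t → lam * t ^ 3 * y t ^ 2 ≤ K := by
    intro t ht
    have htpos : 0 < t := lt_of_lt_of_le ht₀ ht
    have h1 : F t ≤ G t := by
      have hexp1 : 1 ≤ Real.exp (c / t) := Real.one_le_exp (by positivity)
      have hF0 : 0 ≤ F t := le_trans (by positivity) (hFlow t ht)
      calc F t = F t * 1 := (mul_one _).symm
        _ ≤ F t * Real.exp (c / t) := mul_le_mul_of_nonneg_left hexp1 hF0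
        _ = G t := rfl
    have h2 : G t ≤ K := hanti Set.self_mem_Ici ht ht
    exact le_trans (le_trans (hFlow t ht) h1) h2
  set C : ℝ := Real.sqrt (K / lam) with hC_def
  have hC0 : 0 ≤ C := Real.sqrt_nonneg _
  have hC2 : C ^ 2 = K / lam := Real.sq_sqrt (by positivity)
  have hbound : ∀ t, t₀ ≤ t → |y t| ≤ C * t ^ (-(3 : ℝ) / 2) := by
    intro t ht
    have htpos : 0 < t := lt_of_lt_of_le ht₀ ht
    have hrp : (t ^ (-(3 : ℝ) / 2)) ^ 2 = (t ^ 3)⁻¹ := by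
      rw [← Real.rpow_natCast (t ^ (-(3:ℝ)/2)) 2, ← Real.rpow_mul htpos.le,
        ← Real.rpow_natCast t 3, ← Real.rpow_neg htpos.le]
      norm_num
    have hrpos : 0 ≤ t ^ (-(3 : ℝ) / 2) := Real.rpow_nonneg htpos.le _
    have hsq : y t ^ 2 ≤ (C * t ^ (-(3 : ℝ) / 2)) ^ 2 := by
      rw [mul_pow, hC2, hrp,
        show K / lam * (t ^ 3)⁻¹ = K / (lam * t ^ 3) by field_simp,
        le_div_iff₀ (mul_pos hlam (pow_pos htpos 3))]
      nlinarith [hmain t ht]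
    calc |y t| = Real.sqrt (y t ^ 2) := (Real.sqrt_sq_eq_abs _).symm
      _ ≤ Real.sqrt ((C * t ^ (-(3 : ℝ) / 2)) ^ 2) := Real.sqrt_le_sqrt hsq
      _ = C * t ^ (-(3 : ℝ) / 2) := Real.sqrt_sq (by positivity)
  refine ⟨⟨C, hC0, hbound⟩, ?_⟩
  have hg : Tendsto (fun t : ℝ => C * t ^ (-(3 : ℝ) / 2)) atTop (nhds 0) := by
    have := (tendsto_rpow_neg_atTop (by norm_num : (0:ℝ) < 3/2)).const_mul C
    simpa [neg_div] using this
  apply squeeze_zero_norm' _ hg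
  filter_upwards [eventually_ge_atTop t₀] with t ht
  simpa using hbound t ht
end

section
/- Let λ = -μ² < 0 with μ > 0, and let t₀ > 0. Consider real solutions of the modal equation y''(t) + (3/t) y'(t) + λ y(t) = 0 on [t₀, ∞). There exists a linear subspace L ⊆ ℝ² of dimension at most 1 such that for every initial condition (y(t₀), y'(t₀)) ∈ ℝ² \ L, the corresponding solution satisfies: for every μ' < μ, e^{-μ' t} |y(t)| → ∞ as t → ∞ (exponential growth at rate μ). -/
open Filter

namespace Stmt2Aux

open Set Real Topology

variable {μ t₀ : ℝ}

lemma monoOn {D : Set ℝ} (hD : Convex ℝ D) {f f' : ℝ → ℝ}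
    (hf : ∀ t ∈ D, HasDerivAt f (f' t) t) (h0 : ∀ t ∈ interior D, 0 ≤ f' t) :
    MonotoneOn f D := by
  apply monotoneOn_of_deriv_nonneg hD
  · exact fun t ht => (hf t ht).continuousAt.continuousWithinAt
  · exact fun t ht => ((hf t (interior_subset ht)).differentiableAt).differentiableWithinAt
  · intro t ht; rw [(hf t (interior_subset ht)).deriv]; exact h0 t ht


lemma antiOn {D : Set ℝ} (hD : Convex ℝ D) {f f' : ℝ → ℝ}
    (hf : ∀ t ∈ D, HasDerivAt f (f' t) t) (h0 : ∀ t ∈ interior D, f' t ≤ 0) :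
    AntitoneOn f D := by
  apply antitoneOn_of_deriv_nonpos hD
  · exact fun t ht => (hf t ht).continuousAt.continuousWithinAt
  · exact fun t ht => ((hf t (interior_subset ht)).differentiableAt).differentiableWithinAt
  · intro t ht; rw [(hf t (interior_subset ht)).deriv]; exact h0 t ht

lemma g_hasDeriv (hμ : 0 < μ) (ht₀ : 0 < t₀) {v v' : ℝ → ℝ}
    (hv : ∀ t, t₀ ≤ t → HasDerivAt v (v' t) t)
    (hv' : ∀ t, t₀ ≤ t → HasDerivAt v' ((μ^2 + 3/(4*t^2)) * v t) t)
    {t : ℝ} (ht : t₀ ≤ t) :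
    HasDerivAt (fun s => Real.exp (μ*s) * (v' s - μ * v s))
      (Real.exp (μ*t) * (3/(4*t^2) * v t)) t := by
  have hz : HasDerivAt (fun s => v' s - μ * v s) ((μ^2 + 3/(4*t^2)) * v t - μ * v' t) t :=
    (hv' t ht).sub ((hv t ht).const_mul μ)
  have h1 : HasDerivAt (fun s : ℝ => μ*s) μ t := by
    simpa using ((hasDerivAt_id t).const_mul μ)
  have he : HasDerivAt (fun s : ℝ => Real.exp (μ*s)) (Real.exp (μ*t) * μ) t :=
    (Real.hasDerivAt_exp _).comp t h1
  have := he.mul hz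
  exact this.congr_deriv (by ring)

lemma h_hasDeriv (hμ : 0 < μ) (ht₀ : 0 < t₀) {v v' : ℝ → ℝ}
    (hv : ∀ t, t₀ ≤ t → HasDerivAt v (v' t) t)
    (hv' : ∀ t, t₀ ≤ t → HasDerivAt v' ((μ^2 + 3/(4*t^2)) * v t) t)
    {t : ℝ} (ht : t₀ ≤ t) :
    HasDerivAt (fun s => Real.exp (-(μ*s)) * (v' s + μ * v s))
      (Real.exp (-(μ*t)) * (3/(4*t^2) * v t)) t := by
  have hz : HasDerivAt (fun s => v' s + μ * v s) ((μ^2 + 3/(4*t^2)) * v t + μ * v' t) t :=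
    (hv' t ht).add ((hv t ht).const_mul μ)
  have h1 : HasDerivAt (fun s : ℝ => -(μ*s)) (-μ) t := by
    simpa [Pi.neg_def] using ((hasDerivAt_id t).const_mul μ).neg
  have he : HasDerivAt (fun s : ℝ => Real.exp (-(μ*s))) (Real.exp (-(μ*t)) * (-μ)) t :=
    (Real.hasDerivAt_exp _).comp t h1
  have := he.mul hz
  exact this.congr_deriv (by ring)

lemma pos_persist (hμ : 0 < μ) (ht₀ : 0 < t₀) {v v' : ℝ → ℝ}
    (hv : ∀ t, t₀ ≤ t → HasDerivAt v (v' t) t)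
    (hv' : ∀ t, t₀ ≤ t → HasDerivAt v' ((μ^2 + 3/(4*t^2)) * v t) t)
    {T : ℝ} (hT : t₀ ≤ T) (hvT : 0 < v T) (hzT : 0 < v' T + μ * v T) :
    ∀ t, T ≤ t → 0 < v t := by
  by_contra hcon
  push_neg at hcon
  obtain ⟨t₁, ht₁, hvt₁⟩ := hcon
  set A : Set ℝ := Icc T t₁ ∩ v ⁻¹' (Iic 0) with hA
  have hAcont : ContinuousOn v (Icc T t₁) := fun t ht =>
    (hv t (hT.trans ht.1)).continuousAt.continuousWithinAt
  have hAclosed : IsClosed A := hAcont.preimage_isClosed_of_isClosed isClosed_Icc isClosed_Iic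
  have hAne : A.Nonempty := ⟨t₁, ⟨ht₁, le_refl _⟩, hvt₁⟩
  have hAbdd : BddBelow A := (bddBelow_Icc (a := t₁) (b := T)).mono inter_subset_left
  set c := sInf A with hc
  have hcA : c ∈ A := hAclosed.csInf_mem hAne hAbdd
  have hTc : T ≤ c := hcA.1.1
  have hct₀ : t₀ ≤ c := hT.trans hTc
  have hvc : v c ≤ 0 := hcA.2
  have hTc' : T < c := by
    rcases hTc.lt_or_eq with h | h
    · exact h
    · exact absurd hvc (by rw [← h]; exact not_le.2 hvT)
  -- points below c in [T, c) are positive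
  have hpos : ∀ t, T ≤ t → t < c → 0 < v t := by
    intro t htT htc
    by_contra hneg
    push_neg at hneg
    have : t ∈ A := ⟨⟨htT, htc.le.trans hcA.1.2⟩, hneg⟩
    exact absurd (csInf_le hAbdd this) (not_le.2 htc)
  -- v c = 0
  have hmem : Iio c ∩ Ioi T ∈ 𝓝[Iio c] c := inter_mem_nhdsWithin _ (Ioi_mem_nhds hTc')
  have hvc0 : v c = 0 := by
    have htend : Tendsto v (𝓝[Iio c] c) (𝓝 (v c)) :=
      (hv c hct₀).continuousAt.continuousWithinAt
    have hev : ∀ᶠ t in 𝓝[Iio c] c, 0 ≤ v t := by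
      filter_upwards [hmem] with t ht
      exact (hpos t ht.2.le ht.1).le
    have : (0:ℝ) ≤ v c := ge_of_tendsto htend hev
    linarith
  -- h is monotone on Icc T c
  have hmono : MonotoneOn (fun s => Real.exp (-(μ*s)) * (v' s + μ * v s)) (Icc T c) := by
    apply monoOn (convex_Icc T c)
    · exact fun t ht => h_hasDeriv hμ ht₀ hv hv' (hT.trans ht.1)
    · intro t ht
      rw [interior_Icc] at ht
      have htpos : 0 < t := lt_of_lt_of_le ht₀ (hT.trans ht.1.le)
      have hvt : 0 ≤ v t := (hpos t ht.1.le ht.2).le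
      have : 0 ≤ 3/(4*t^2) * v t := by positivity
      positivity
  have hhc := hmono (left_mem_Icc.2 hTc'.le) (right_mem_Icc.2 hTc'.le) hTc'.le
  have hzc : 0 < v' c + μ * v c := by
    have h1 : 0 < Real.exp (-(μ*T)) * (v' T + μ * v T) := by positivity
    have hhc' : Real.exp (-(μ*T)) * (v' T + μ * v T) ≤ Real.exp (-(μ*c)) * (v' c + μ * v c) := hhc
    nlinarith [Real.exp_pos (-(μ*c)), lt_of_lt_of_le h1 hhc']
  have hv'c : 0 < v' c := by rw [hvc0] at hzc; linarith
  -- contradiction via slope from the left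
  have hslope := hasDerivAt_iff_tendsto_slope.1 (hv c hct₀)
  have h2 : Tendsto (slope v c) (𝓝[Iio c] c) (𝓝 (v' c)) :=
    hslope.mono_left (nhdsWithin_mono c fun x hx => ne_of_lt hx)
  have h3 : ∀ᶠ t in 𝓝[Iio c] c, 0 < slope v c t := h2.eventually (lt_mem_nhds hv'c)
  have h4 : ∀ᶠ t in 𝓝[Iio c] c, slope v c t < 0 := by
    filter_upwards [hmem] with t ht
    have : slope v c t = v t / (t - c) := by
      rw [slope_def_field, hvc0]; ring_nf
    rw [this]
    exact div_neg_of_pos_of_neg (hpos t ht.2.le ht.1) (sub_neg.2 ht.1)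
  have : NeBot (𝓝[Iio c] c) := nhdsLT_neBot c
  obtain ⟨t, h5, h6⟩ := (h3.and h4).exists
  linarith


lemma phi_hasDeriv (hμ : 0 < μ) (ht₀ : 0 < t₀) {v v' : ℝ → ℝ}
    (hv : ∀ t, t₀ ≤ t → HasDerivAt v (v' t) t)
    {t : ℝ} (ht : t₀ ≤ t) :
    HasDerivAt (fun s => Real.exp (μ*s) * v s)
      (Real.exp (μ*t) * (v' t + μ * v t)) t := by
  have h1 : HasDerivAt (fun s : ℝ => μ*s) μ t := by
    simpa using ((hasDerivAt_id t).const_mul μ)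
  have he : HasDerivAt (fun s : ℝ => Real.exp (μ*s)) (Real.exp (μ*t) * μ) t :=
    (Real.hasDerivAt_exp _).comp t h1
  have := he.mul (hv t ht)
  exact this.congr_deriv (by ring)

lemma growth_lower (hμ : 0 < μ) (ht₀ : 0 < t₀) {v v' : ℝ → ℝ}
    (hv : ∀ t, t₀ ≤ t → HasDerivAt v (v' t) t)
    (hv' : ∀ t, t₀ ≤ t → HasDerivAt v' ((μ^2 + 3/(4*t^2)) * v t) t)
    {T : ℝ} (hT : t₀ ≤ T) (hvT : 0 < v T) (hzT : 0 < v' T + μ * v T) :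
    ∃ a, 0 < a ∧ ∃ b, ∀ t, T ≤ t → a * Real.exp (μ * t) - b ≤ v t := by
  have hpos := pos_persist hμ ht₀ hv hv' hT hvT hzT
  have hmono : MonotoneOn (fun s => Real.exp (-(μ*s)) * (v' s + μ * v s)) (Ici T) := by
    apply monoOn (convex_Ici T)
    · exact fun t ht => h_hasDeriv hμ ht₀ hv hv' (hT.trans ht)
    · intro t ht
      rw [interior_Ici] at ht
      have htpos : 0 < t := lt_of_lt_of_le ht₀ (hT.trans ht.le)
      have hvt : 0 ≤ v t := (hpos t ht.le).le
      positivity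
  set c₀ := Real.exp (-(μ*T)) * (v' T + μ * v T) with hc₀
  have hc₀pos : 0 < c₀ := by positivity
  have hzge : ∀ t, T ≤ t → c₀ * Real.exp (μ * t) ≤ v' t + μ * v t := by
    intro t ht
    have h2 : c₀ ≤ Real.exp (-(μ*t)) * (v' t + μ * v t) :=
      hmono self_mem_Ici (mem_Ici.2 ht) ht
    rw [Real.exp_neg, inv_mul_eq_div] at h2
    exact (le_div_iff₀ (Real.exp_pos _)).1 h2
  set a := c₀ / (2*μ) with ha
  have hapos : 0 < a := by positivity
  have ee : ∀ t : ℝ, Real.exp (μ*t) * Real.exp (μ*t) = Real.exp (2*μ*t) := by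
    intro t; rw [← Real.exp_add]; ring_nf
  have hψmono : MonotoneOn (fun s => Real.exp (μ*s) * v s - a * Real.exp (2*μ*s)) (Ici T) := by
    apply monoOn (convex_Ici T) (f' := fun s =>
      Real.exp (μ*s) * (v' s + μ * v s) - a * (Real.exp (2*μ*s) * (2*μ)))
    · intro t ht
      have he2 : HasDerivAt (fun s : ℝ => Real.exp (2*μ*s)) (Real.exp (2*μ*t) * (2*μ)) t :=
        (Real.hasDerivAt_exp _).comp t (by simpa using (hasDerivAt_id t).const_mul (2*μ))
      exact (phi_hasDeriv hμ ht₀ hv (hT.trans ht)).sub (he2.const_mul a)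
    · intro t ht
      rw [interior_Ici] at ht
      have ha2 : a * (Real.exp (2*μ*t) * (2*μ)) = c₀ * Real.exp (2*μ*t) := by
        rw [ha]; field_simp
      have h3 := mul_le_mul_of_nonneg_left (hzge t ht.le) (Real.exp_pos (μ*t)).le
      have h4 : Real.exp (μ*t) * (c₀ * Real.exp (μ*t)) = c₀ * Real.exp (2*μ*t) := by
        rw [← ee t]; ring
      rw [h4] at h3
      rw [ha2]
      linarith
  set d := Real.exp (μ*T) * v T - a * Real.exp (2*μ*T) with hd
  refine ⟨a, hapos, |d| * Real.exp (-(μ*T)), ?_⟩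
  intro t ht
  have hψ : d ≤ Real.exp (μ*t) * v t - a * Real.exp (2*μ*t) :=
    hψmono self_mem_Ici (mem_Ici.2 ht) ht
  have hkey : a * Real.exp (2*μ*t) + d ≤ Real.exp (μ*t) * v t := by linarith
  have hbound : -((|d| * Real.exp (-(μ*T))) * Real.exp (μ*t)) ≤ d := by
    rcases le_or_gt 0 d with hdge | hdlt
    · have : 0 ≤ (|d| * Real.exp (-(μ*T))) * Real.exp (μ*t) := by positivity
      linarith
    · rw [abs_of_neg hdlt]
      have hX : 1 ≤ Real.exp (-(μ*T)) * Real.exp (μ*t) := by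
        rw [← Real.exp_add]
        apply Real.one_le_exp
        nlinarith
      nlinarith
  have h5 : Real.exp (μ*t) * (a * Real.exp (μ*t) - |d| * Real.exp (-(μ*T))) ≤
      Real.exp (μ*t) * v t := by
    calc Real.exp (μ*t) * (a * Real.exp (μ*t) - |d| * Real.exp (-(μ*T)))
        = a * (Real.exp (μ*t) * Real.exp (μ*t)) - (|d| * Real.exp (-(μ*T))) * Real.exp (μ*t) := by
          ring
      _ = a * Real.exp (2*μ*t) - (|d| * Real.exp (-(μ*T))) * Real.exp (μ*t) := by rw [ee t]
      _ ≤ a * Real.exp (2*μ*t) + d := by linarith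
      _ ≤ Real.exp (μ*t) * v t := hkey
  exact (mul_le_mul_iff_right₀ (Real.exp_pos _)).1 h5


lemma growth_lower_neg (hμ : 0 < μ) (ht₀ : 0 < t₀) {v v' : ℝ → ℝ}
    (hv : ∀ t, t₀ ≤ t → HasDerivAt v (v' t) t)
    (hv' : ∀ t, t₀ ≤ t → HasDerivAt v' ((μ^2 + 3/(4*t^2)) * v t) t)
    {T : ℝ} (hT : t₀ ≤ T) (hvT : v T < 0) (hzT : v' T + μ * v T < 0) :
    ∃ a, 0 < a ∧ ∃ b, ∀ t, T ≤ t → a * Real.exp (μ * t) - b ≤ -(v t) := by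
  have hnv : ∀ t, t₀ ≤ t → HasDerivAt (fun s => -(v s)) (-(v' t)) t := fun t ht => (hv t ht).neg
  have hnv' : ∀ t, t₀ ≤ t → HasDerivAt (fun s => -(v' s)) ((μ^2 + 3/(4*t^2)) * (-(v t))) t := by
    intro t ht
    have := (hv' t ht).neg
    rwa [← mul_neg] at this
  exact growth_lower hμ ht₀ hnv hnv' hT (by simpa using hvT)
    (by show 0 < -(v' T) + μ * -(v T); nlinarith)

lemma decay (hμ : 0 < μ) (ht₀ : 0 < t₀) {v v' : ℝ → ℝ}
    (hv : ∀ t, t₀ ≤ t → HasDerivAt v (v' t) t)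
    (hv' : ∀ t, t₀ ≤ t → HasDerivAt v' ((μ^2 + 3/(4*t^2)) * v t) t)
    (bad : ∀ t, t₀ ≤ t → ¬(0 < v t ∧ 0 < v' t + μ * v t) ∧
      ¬(v t < 0 ∧ v' t + μ * v t < 0)) :
    ∃ C, 0 ≤ C ∧ ∀ t, t₀ ≤ t →
      |v t| ≤ C * Real.exp (-(μ * t)) ∧ |v' t| ≤ C * Real.exp (-(μ * t)) := by
  have hsq : AntitoneOn (fun s => (Real.exp (μ*s) * v s)^2) (Ici t₀) := by
    apply antiOn (convex_Ici t₀) (f' := fun s =>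
      2 * (Real.exp (μ*s) * v s) * (Real.exp (μ*s) * (v' s + μ * v s)))
    · intro t ht
      have h2 := (phi_hasDeriv hμ ht₀ hv ht).pow 2
      refine h2.congr_deriv ?_
      push_cast
      ring
    · intro t ht
      rw [interior_Ici] at ht
      have ht' : t₀ ≤ t := ht.le
      show 2 * (Real.exp (μ*t) * v t) * (Real.exp (μ*t) * (v' t + μ * v t)) ≤ 0
      rcases lt_trichotomy (v t) 0 with hvt | hvt | hvt
      · have hz : 0 ≤ v' t + μ * v t := by
          by_contra hzz; push_neg at hzz
          exact (bad t ht').2 ⟨hvt, hzz⟩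
        have h1 : Real.exp (μ*t) * v t ≤ 0 :=
          (mul_neg_of_pos_of_neg (Real.exp_pos _) hvt).le
        have h2 : 0 ≤ Real.exp (μ*t) * (v' t + μ * v t) :=
          mul_nonneg (Real.exp_pos _).le hz
        have h3 := mul_nonpos_iff.mpr (Or.inr ⟨h1, h2⟩)
        linarith
      · simp [hvt]
      · have hz : v' t + μ * v t ≤ 0 := by
          by_contra hzz; push_neg at hzz
          exact (bad t ht').1 ⟨hvt, hzz⟩
        have h1 : 0 ≤ Real.exp (μ*t) * v t :=
          (mul_pos (Real.exp_pos _) hvt).le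
        have h2 : Real.exp (μ*t) * (v' t + μ * v t) ≤ 0 :=
          mul_nonpos_iff.mpr (Or.inl ⟨(Real.exp_pos _).le, hz⟩)
        have h3 := mul_nonpos_iff.mpr (Or.inl ⟨h1, h2⟩)
        linarith
  set K := |Real.exp (μ*t₀) * v t₀| with hK
  have hKnn : 0 ≤ K := abs_nonneg _
  have hvbound : ∀ t, t₀ ≤ t → |v t| ≤ K * Real.exp (-(μ*t)) := by
    intro t ht
    have h1 : (Real.exp (μ*t) * v t)^2 ≤ (Real.exp (μ*t₀) * v t₀)^2 :=
      hsq self_mem_Ici (mem_Ici.2 ht) ht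
    have h2 : |Real.exp (μ*t) * v t| ≤ K := by
      rw [hK, ← Real.sqrt_sq_eq_abs, ← Real.sqrt_sq_eq_abs]
      exact Real.sqrt_le_sqrt h1
    rw [abs_mul, abs_of_pos (Real.exp_pos _)] at h2
    rw [Real.exp_neg, mul_comm K, ← div_eq_inv_mul, le_div_iff₀ (Real.exp_pos _)]
    linarith [h2]
  have hgabs : ∀ t, t₀ < t → |Real.exp (μ*t) * (3/(4*t^2) * v t)| ≤ 3*K/(4*t^2) := by
    intro t ht
    have htpos : 0 < t := lt_trans ht₀ ht
    calc |Real.exp (μ*t) * (3/(4*t^2) * v t)|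
        = Real.exp (μ*t) * (3/(4*t^2)) * |v t| := by
          rw [abs_mul, abs_mul, abs_of_pos (Real.exp_pos _),
            abs_of_pos (by positivity : (0:ℝ) < 3/(4*t^2))]
          ring
      _ ≤ Real.exp (μ*t) * (3/(4*t^2)) * (K * Real.exp (-(μ*t))) := by
          apply mul_le_mul_of_nonneg_left (hvbound t ht.le)
          positivity
      _ = 3*K/(4*t^2) * (Real.exp (μ*t) * Real.exp (-(μ*t))) := by ring
      _ = 3*K/(4*t^2) := by rw [← Real.exp_add]; simp
  have hgmono : MonotoneOn (fun s => Real.exp (μ*s) * (v' s - μ * v s) - (3*K/4) * s⁻¹)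
      (Ici t₀) := by
    apply monoOn (convex_Ici t₀) (f' := fun s =>
      Real.exp (μ*s) * (3/(4*s^2) * v s) - (3*K/4) * (-(s^2)⁻¹))
    · intro t ht
      have hne : t ≠ 0 := (lt_of_lt_of_le ht₀ ht).ne'
      exact (g_hasDeriv hμ ht₀ hv hv' ht).sub ((hasDerivAt_inv hne).const_mul (3*K/4))
    · intro t ht
      rw [interior_Ici] at ht
      have htpos : 0 < t := lt_of_lt_of_le ht₀ ht.le
      have h2 : (3*K/4) * (-(t^2)⁻¹) = -(3*K/(4*t^2)) := by field_simp
      rw [h2]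
      linarith [neg_abs_le (Real.exp (μ*t) * (3/(4*t^2) * v t)), hgabs t ht]
  have hganti : AntitoneOn (fun s => Real.exp (μ*s) * (v' s - μ * v s) + (3*K/4) * s⁻¹)
      (Ici t₀) := by
    apply antiOn (convex_Ici t₀) (f' := fun s =>
      Real.exp (μ*s) * (3/(4*s^2) * v s) + (3*K/4) * (-(s^2)⁻¹))
    · intro t ht
      have hne : t ≠ 0 := (lt_of_lt_of_le ht₀ ht).ne'
      exact (g_hasDeriv hμ ht₀ hv hv' ht).add ((hasDerivAt_inv hne).const_mul (3*K/4))
    · intro t ht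
      rw [interior_Ici] at ht
      have htpos : 0 < t := lt_of_lt_of_le ht₀ ht.le
      have h2 : (3*K/4) * (-(t^2)⁻¹) = -(3*K/(4*t^2)) := by field_simp
      rw [h2]
      linarith [le_abs_self (Real.exp (μ*t) * (3/(4*t^2) * v t)), hgabs t ht]
  set G := |Real.exp (μ*t₀) * (v' t₀ - μ * v t₀)| + (3*K/4) * t₀⁻¹ with hG
  have hGnn : 0 ≤ G := by positivity
  have hgbound : ∀ t, t₀ ≤ t → |Real.exp (μ*t) * (v' t - μ * v t)| ≤ G := by
    intro t ht
    have htpos : 0 < t := lt_of_lt_of_le ht₀ ht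
    have hinvnn : 0 ≤ (3*K/4) * t⁻¹ := by positivity
    have h1 : Real.exp (μ*t₀) * (v' t₀ - μ * v t₀) - (3*K/4) * t₀⁻¹ ≤
        Real.exp (μ*t) * (v' t - μ * v t) - (3*K/4) * t⁻¹ :=
      hgmono self_mem_Ici (mem_Ici.2 ht) ht
    have h2 : Real.exp (μ*t) * (v' t - μ * v t) + (3*K/4) * t⁻¹ ≤
        Real.exp (μ*t₀) * (v' t₀ - μ * v t₀) + (3*K/4) * t₀⁻¹ :=
      hganti self_mem_Ici (mem_Ici.2 ht) ht
    rw [abs_le, hG]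
    constructor
    · linarith [neg_abs_le (Real.exp (μ*t₀) * (v' t₀ - μ * v t₀))]
    · linarith [le_abs_self (Real.exp (μ*t₀) * (v' t₀ - μ * v t₀))]
  refine ⟨K + (μ * K + G), by positivity, ?_⟩
  intro t ht
  have hev : 0 < Real.exp (-(μ*t)) := Real.exp_pos _
  constructor
  · have := hvbound t ht
    nlinarith [mul_nonneg (mul_nonneg hμ.le hKnn) hev.le, mul_nonneg hGnn hev.le]
  · have h3 : |v' t - μ * v t| ≤ G * Real.exp (-(μ*t)) := by
      have h4 := hgbound t ht
      rw [abs_mul, abs_of_pos (Real.exp_pos _)] at h4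
      rw [Real.exp_neg, mul_comm G, ← div_eq_inv_mul, le_div_iff₀ (Real.exp_pos _)]
      linarith
    have h5 : |v' t| ≤ μ * |v t| + |v' t - μ * v t| := by
      have := abs_add_le (μ * v t) (v' t - μ * v t)
      simp only [add_sub_cancel] at this
      rw [abs_mul, abs_of_pos hμ] at this
      linarith
    have h6 := hvbound t ht
    nlinarith [mul_le_mul_of_nonneg_left h6 hμ.le, mul_nonneg hKnn hev.le]

lemma wronskian_zero (hμ : 0 < μ) (ht₀ : 0 < t₀) {v1 v1' v2 v2' : ℝ → ℝ}
    (h1 : ∀ t, t₀ ≤ t → HasDerivAt v1 (v1' t) t)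
    (h1' : ∀ t, t₀ ≤ t → HasDerivAt v1' ((μ^2 + 3/(4*t^2)) * v1 t) t)
    (h2 : ∀ t, t₀ ≤ t → HasDerivAt v2 (v2' t) t)
    (h2' : ∀ t, t₀ ≤ t → HasDerivAt v2' ((μ^2 + 3/(4*t^2)) * v2 t) t)
    {C1 C2 : ℝ}
    (hb1 : ∀ t, t₀ ≤ t → |v1 t| ≤ C1 * Real.exp (-(μ*t)) ∧ |v1' t| ≤ C1 * Real.exp (-(μ*t)))
    (hb2 : ∀ t, t₀ ≤ t → |v2 t| ≤ C2 * Real.exp (-(μ*t)) ∧ |v2' t| ≤ C2 * Real.exp (-(μ*t))) :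
    v1 t₀ * v2' t₀ - v1' t₀ * v2 t₀ = 0 := by
  set W := fun t => v1 t * v2' t - v1' t * v2 t with hWdef
  have hW : ∀ t ∈ Ici t₀, HasDerivAt W ((fun _ : ℝ => (0:ℝ)) t) t := by
    intro t ht
    rw [mem_Ici] at ht
    have := ((h1 t ht).mul (h2' t ht)).sub ((h1' t ht).mul (h2 t ht))
    exact this.congr_deriv (by ring)
  have hWconst : ∀ t, t₀ ≤ t → W t = W t₀ := by
    have hm : MonotoneOn W (Ici t₀) := monoOn (convex_Ici t₀) hW (fun _ _ => le_refl 0)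
    have ha : AntitoneOn W (Ici t₀) := antiOn (convex_Ici t₀) hW (fun _ _ => le_refl 0)
    intro t ht
    exact le_antisymm (ha self_mem_Ici (mem_Ici.2 ht) ht) (hm self_mem_Ici (mem_Ici.2 ht) ht)
  have habs : ∀ t, t₀ ≤ t →
      |W t₀| ≤ 2*C1*C2 * (Real.exp (-(μ*t)) * Real.exp (-(μ*t))) := by
    intro t ht
    rw [← hWconst t ht]
    obtain ⟨b1, b1'⟩ := hb1 t ht
    obtain ⟨b2, b2'⟩ := hb2 t ht
    have p1 : |v1 t| * |v2' t| ≤ (C1 * Real.exp (-(μ*t))) * (C2 * Real.exp (-(μ*t))) :=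
      mul_le_mul b1 b2' (abs_nonneg _) (le_trans (abs_nonneg _) b1)
    have p2 : |v1' t| * |v2 t| ≤ (C1 * Real.exp (-(μ*t))) * (C2 * Real.exp (-(μ*t))) :=
      mul_le_mul b1' b2 (abs_nonneg _) (le_trans (abs_nonneg _) b1')
    have tri : |W t| ≤ |v1 t| * |v2' t| + |v1' t| * |v2 t| := by
      calc |W t| = |v1 t * v2' t + -(v1' t * v2 t)| := by rw [hWdef]; ring_nf
        _ ≤ |v1 t * v2' t| + |-(v1' t * v2 t)| := abs_add_le _ _
        _ = |v1 t| * |v2' t| + |v1' t| * |v2 t| := by rw [abs_neg, abs_mul, abs_mul]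
    nlinarith [tri, p1, p2]
  have htend : Tendsto (fun t => 2*C1*C2 * (Real.exp (-(μ*t)) * Real.exp (-(μ*t))))
      atTop (𝓝 0) := by
    have hμt : Tendsto (fun t : ℝ => μ * t) atTop atTop := Tendsto.const_mul_atTop hμ tendsto_id
    have h2 : Tendsto (fun t : ℝ => Real.exp (-(μ * t))) atTop (𝓝 0) :=
      Real.tendsto_exp_atBot.comp (tendsto_neg_atTop_atBot.comp hμt)
    have := (h2.mul h2).const_mul (2*C1*C2)
    simpa using this
  have hle : |W t₀| ≤ 0 := by
    apply ge_of_tendsto htend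
    filter_upwards [eventually_ge_atTop t₀] with t ht
    exact habs t ht
  have : |W t₀| = 0 := le_antisymm hle (abs_nonneg _)
  exact abs_eq_zero.1 this

lemma modal_V (hμ : 0 < μ) (ht₀ : 0 < t₀) {y y' : ℝ → ℝ}
    (hy : ∀ t, t₀ ≤ t → HasDerivAt y (y' t) t)
    (hy' : ∀ t, t₀ ≤ t → HasDerivAt y' (-(3 / t) * y' t - (-μ^2) * y t) t) :
    (∀ t, t₀ ≤ t → HasDerivAt (fun s => s ^ (3/2:ℝ) * y s)
        ((3/2) * t ^ (1/2:ℝ) * y t + t ^ (3/2:ℝ) * y' t) t) ∧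
    (∀ t, t₀ ≤ t → HasDerivAt (fun s => (3/2) * s ^ (1/2:ℝ) * y s + s ^ (3/2:ℝ) * y' s)
        ((μ^2 + 3/(4*t^2)) * (t ^ (3/2:ℝ) * y t)) t) := by
  have hp : ∀ t : ℝ, t₀ ≤ t → HasDerivAt (fun x : ℝ => x ^ (3/2:ℝ)) ((3/2) * t ^ (1/2:ℝ)) t := by
    intro t ht
    have hne : t ≠ 0 := (lt_of_lt_of_le ht₀ ht).ne'
    have := Real.hasDerivAt_rpow_const (x := t) (p := (3/2:ℝ)) (Or.inl hne)
    convert this using 2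
    norm_num
  have hp2 : ∀ t : ℝ, t₀ ≤ t →
      HasDerivAt (fun x : ℝ => x ^ (1/2:ℝ)) ((1/2) * t ^ (-(1/2):ℝ)) t := by
    intro t ht
    have hne : t ≠ 0 := (lt_of_lt_of_le ht₀ ht).ne'
    have := Real.hasDerivAt_rpow_const (x := t) (p := (1/2:ℝ)) (Or.inl hne)
    convert this using 2
    norm_num
  constructor
  · intro t ht
    exact (hp t ht).mul (hy t ht)
  · intro t ht
    have htpos : 0 < t := lt_of_lt_of_le ht₀ ht
    have hne : t ≠ 0 := htpos.ne'
    have d1 := ((hp2 t ht).const_mul (3/2:ℝ)).mul (hy t ht)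
    have d2 := (hp t ht).mul (hy' t ht)
    have hsum := d1.add d2
    refine hsum.congr_deriv ?_
    set s := t ^ (1/2:ℝ) with hs
    have hspos : 0 < s := Real.rpow_pos_of_pos htpos _
    have hs2 : s * s = t := by
      rw [hs, ← Real.rpow_add htpos]
      norm_num
    have h32 : t ^ (3/2:ℝ) = t * s := by
      rw [hs, ← Real.rpow_one_add' (by positivity) (by norm_num : (1:ℝ) + 1/2 ≠ 0)]
      norm_num
    have hn : t ^ (-(1/2):ℝ) = s⁻¹ := by
      rw [hs, ← Real.rpow_neg htpos.le]
    rw [h32, hn]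
    have ht' : t = s * s := hs2.symm
    rw [ht']
    field_simp
    ring

lemma tendsto_bridge (hμ : 0 < μ) (ht₀ : 0 < t₀) {y : ℝ → ℝ} {a b T : ℝ}
    (ha : 0 < a) (hT : t₀ ≤ T)
    (hbound : ∀ t, T ≤ t → a * Real.exp (μ * t) - b ≤ |t ^ (3/2:ℝ) * y t|) :
    ∀ μ', μ' < μ → Tendsto (fun t => Real.exp (-μ' * t) * |y t|) atTop atTop := by
  intro μ' hμ'
  have hc : 0 < μ - μ' := by linarith
  have hF : Tendsto (fun t => (a - b * Real.exp (-(μ*t))) * (Real.exp ((μ-μ')*t) / t ^ (3/2:ℝ)))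
      atTop atTop := by
    apply Filter.Tendsto.pos_mul_atTop ha
    · have hμt : Tendsto (fun t : ℝ => μ * t) atTop atTop := Tendsto.const_mul_atTop hμ tendsto_id
      have h2 : Tendsto (fun t : ℝ => Real.exp (-(μ * t))) atTop (𝓝 0) :=
        Real.tendsto_exp_atBot.comp (tendsto_neg_atTop_atBot.comp hμt)
      have h3 := h2.const_mul b
      have h4 := (tendsto_const_nhds (x := a) (α := ℝ) (f := atTop)).sub h3
      simpa using h4
    · exact tendsto_exp_mul_div_rpow_atTop (3/2) (μ - μ') hc
  apply tendsto_atTop_mono' atTop ?_ hF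
  filter_upwards [eventually_ge_atTop T, eventually_gt_atTop (0:ℝ)] with t htT ht0
  have hrp : 0 < t ^ (3/2:ℝ) := Real.rpow_pos_of_pos ht0 _
  have hyabs : |t ^ (3/2:ℝ) * y t| = t ^ (3/2:ℝ) * |y t| := by
    rw [abs_mul, abs_of_pos hrp]
  have h1 : a * Real.exp (μ*t) - b ≤ t ^ (3/2:ℝ) * |y t| := by
    rw [← hyabs]; exact hbound t htT
  have e1 : Real.exp ((μ-μ')*t) = Real.exp (μ*t) * Real.exp (-μ'*t) := by
    rw [← Real.exp_add]; ring_nf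
  have e2 : Real.exp (-(μ*t)) * Real.exp (μ*t) = 1 := by
    rw [← Real.exp_add]; simp
  have hnum : (a - b * Real.exp (-(μ*t))) * Real.exp ((μ-μ')*t)
      = Real.exp (-μ' * t) * (a * Real.exp (μ*t) - b) := by
    rw [e1]
    linear_combination (-(b * Real.exp (-μ' * t))) * e2
  have hkey : (a - b * Real.exp (-(μ*t))) * (Real.exp ((μ-μ')*t) / t ^ (3/2:ℝ))
      = Real.exp (-μ' * t) * (a * Real.exp (μ*t) - b) / t ^ (3/2:ℝ) := by
    rw [← mul_div_assoc, hnum]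
  rw [hkey]
  have h2 : Real.exp (-μ' * t) * (a * Real.exp (μ*t) - b) / t ^ (3/2:ℝ)
      ≤ Real.exp (-μ' * t) * (t ^ (3/2:ℝ) * |y t|) / t ^ (3/2:ℝ) := by
    gcongr
  calc Real.exp (-μ' * t) * (a * Real.exp (μ*t) - b) / t ^ (3/2:ℝ)
      ≤ Real.exp (-μ' * t) * (t ^ (3/2:ℝ) * |y t|) / t ^ (3/2:ℝ) := h2
    _ = Real.exp (-μ' * t) * |y t| := by
        field_simp


lemma decay_of_not_growth (hμ : 0 < μ) (ht₀ : 0 < t₀) {y y' : ℝ → ℝ}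
    (hy : ∀ t, t₀ ≤ t → HasDerivAt y (y' t) t)
    (hy' : ∀ t, t₀ ≤ t → HasDerivAt y' (-(3 / t) * y' t - (-μ^2) * y t) t)
    (hbad : ¬ ∀ μ' : ℝ, μ' < μ →
      Tendsto (fun t => Real.exp (-μ' * t) * |y t|) atTop atTop) :
    ∃ C, 0 ≤ C ∧ ∀ t, t₀ ≤ t →
      |(fun s => s ^ (3/2:ℝ) * y s) t| ≤ C * Real.exp (-(μ * t)) ∧
      |(fun s => (3/2) * s ^ (1/2:ℝ) * y s + s ^ (3/2:ℝ) * y' s) t| ≤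
        C * Real.exp (-(μ * t)) := by
  obtain ⟨hV, hV'⟩ := modal_V hμ ht₀ hy hy'
  apply decay hμ ht₀ hV hV'
  intro t ht
  constructor
  · rintro ⟨hpos, hz⟩
    obtain ⟨a, hapos, bb, hb⟩ := growth_lower hμ ht₀ hV hV' ht hpos hz
    exact hbad (tendsto_bridge hμ ht₀ hapos ht
      (fun u hu => (hb u hu).trans (le_abs_self _)))
  · rintro ⟨hneg, hz⟩
    obtain ⟨a, hapos, bb, hb⟩ := growth_lower_neg hμ ht₀ hV hV' ht hneg hz
    exact hbad (tendsto_bridge hμ ht₀ hapos ht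
      (fun u hu => (hb u hu).trans (neg_le_abs _)))

end Stmt2Aux

open Stmt2Aux Set in
/-- for `lam = -μ² < 0` (μ > 0), there is a linear subspace `L ⊆ ℝ²` of
dimension at most 1 such that every real solution of the modal equation whose initial
data `(y(t₀), y'(t₀))` lies outside `L` grows exponentially at rate `μ`:
`e^{-μ' t} |y(t)| → ∞` for every `μ' < μ`. -/
theorem stmt_2 (μ t₀ : ℝ) (hμ : 0 < μ) (ht₀ : 0 < t₀) :
    ∃ L : Submodule ℝ (ℝ × ℝ), Module.finrank ℝ L ≤ 1 ∧
      ∀ y y' : ℝ → ℝ, IsModalSolution (-μ ^ 2) t₀ y y' →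
        (y t₀, y' t₀) ∉ L →
        ∀ μ' : ℝ, μ' < μ →
          Tendsto (fun t => Real.exp (-μ' * t) * |y t|) atTop atTop := by
  classical
  set Bad : Set (ℝ × ℝ) := {p | ∃ y y' : ℝ → ℝ, IsModalSolution (-μ ^ 2) t₀ y y' ∧
    p = (y t₀, y' t₀) ∧
    ¬ ∀ μ' : ℝ, μ' < μ →
      Tendsto (fun t => Real.exp (-μ' * t) * |y t|) atTop atTop} with hBadDef
  have hdet : ∀ p ∈ Bad, ∀ q ∈ Bad, p.1 * q.2 - p.2 * q.1 = 0 := by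
    rintro p hp q hq
    obtain ⟨y1, y1', hsol1, hpe, hbad1⟩ := hp
    obtain ⟨y2, y2', hsol2, hqe, hbad2⟩ := hq
    obtain ⟨C1, hC1, hb1⟩ := decay_of_not_growth hμ ht₀ hsol1.1 hsol1.2 hbad1
    obtain ⟨C2, hC2, hb2⟩ := decay_of_not_growth hμ ht₀ hsol2.1 hsol2.2 hbad2
    obtain ⟨hV1, hV1'⟩ := modal_V hμ ht₀ hsol1.1 hsol1.2
    obtain ⟨hV2, hV2'⟩ := modal_V hμ ht₀ hsol2.1 hsol2.2
    have hw := wronskian_zero hμ ht₀ hV1 hV1' hV2 hV2' hb1 hb2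
    set A := t₀ ^ (3/2:ℝ) with hA
    have hApos : 0 < A := Real.rpow_pos_of_pos ht₀ _
    have hyw : A * A * (y1 t₀ * y2' t₀ - y1' t₀ * y2 t₀) = 0 := by
      linear_combination hw
    have hdet0 : y1 t₀ * y2' t₀ - y1' t₀ * y2 t₀ = 0 :=
      (mul_eq_zero.1 hyw).resolve_left (mul_ne_zero hApos.ne' hApos.ne')
    rw [hpe, hqe]
    simpa using hdet0
  refine ⟨Submodule.span ℝ Bad, ?_, ?_⟩
  · by_cases hB : ∃ p ∈ Bad, p ≠ (0 : ℝ × ℝ)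
    · obtain ⟨p, hp, hp0⟩ := hB
      have hsub : Bad ⊆ (Submodule.span ℝ {p} : Submodule ℝ (ℝ × ℝ)) := by
        intro q hq
        rw [SetLike.mem_coe, Submodule.mem_span_singleton]
        have hd := hdet p hp q hq
        by_cases hp1 : p.1 = 0
        · have hp2 : p.2 ≠ 0 := by
            intro h2
            exact hp0 (Prod.ext hp1 h2)
          have hq1 : q.1 = 0 := by
            rw [hp1, zero_mul, zero_sub, neg_eq_zero] at hd
            exact (mul_eq_zero.1 hd).resolve_left hp2
          refine ⟨q.2 / p.2, Prod.ext ?_ ?_⟩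
          · simp [hp1, hq1]
          · simp only [Prod.smul_snd, smul_eq_mul]
            field_simp
        · refine ⟨q.1 / p.1, Prod.ext ?_ ?_⟩
          · simp only [Prod.smul_fst, smul_eq_mul]
            field_simp
          · simp only [Prod.smul_snd, smul_eq_mul]
            have hq2 : q.2 = q.1 * p.2 / p.1 := by
              field_simp
              linear_combination hd
            rw [hq2]
            ring
      have hle : Submodule.span ℝ Bad ≤ Submodule.span ℝ {p} := Submodule.span_le.2 hsub
      exact le_trans (Submodule.finrank_mono hle)
        (le_of_eq (finrank_span_singleton hp0))
    · push_neg at hB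
      have hsub : Bad ⊆ (⊥ : Submodule ℝ (ℝ × ℝ)) := by
        intro q hq
        rw [SetLike.mem_coe, Submodule.mem_bot]
        exact hB q hq
      have hle : Submodule.span ℝ Bad ≤ ⊥ := Submodule.span_le.2 hsub
      rw [le_bot_iff] at hle
      rw [hle, finrank_bot]
      norm_num
  · intro y y' hsol hnot μ' hμ'
    by_contra hcon
    apply hnot
    apply Submodule.subset_span
    exact ⟨y, y', hsol, rfl, fun hall => hcon (hall μ' hμ')⟩
end

section
/- Let μ > 0 and t₀ ≥ 6/μ + 1. Let (ξ, ζ) : [t₀, ∞) → ℝ² be continuously differentiable with ξ'(t) = ζ(t) and ζ'(t) = −(3/t)ζ(t) + μ²ξ(t) for all t ≥ t₀ (the modal system for eigenvalue λ = −μ²). Define the open region Ω = {(ξ, ζ) ∈ ℝ² : ξ > 0 and ζ > μξ/3} and the Chetaev function W(t) = ξ(t)ζ(t) + (μ/3)ξ(t)² − ξ(t)²/(2t). If (ξ(t₀), ζ(t₀)) ∈ Ω, then: (a) (ξ(t), ζ(t)) ∈ Ω for all t ≥ t₀; (b) W(t) > 0 and W'(t) ≥ (μ/6)·W(t) for all t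 ≥ t₀, hence W(t) ≥ W(t₀)·e^{(μ/6)(t − t₀)}; (c) ξ(t) → ∞ as t → ∞. -/
open Filter Set


-- key algebraic inequality: W' - (μ/6) W ≥ 0
lemma chetaev_key (μ t a b : ℝ) (hμ : 0 < μ) (ht : 0 < t) (hμt : 6 + μ ≤ μ * t)
    (ha : 0 < a) (hb : μ * a / 3 < b) :
    μ / 6 * (a * b + μ / 3 * a ^ 2 - a ^ 2 / (2 * t)) ≤
      b ^ 2 + μ ^ 2 * a ^ 2 + (2 * μ / 3 - 4 / t) * (a * b) + a ^ 2 / (2 * t ^ 2) := by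
  have hb0 : 0 < b := lt_of_le_of_lt (by positivity) hb
  rw [← sub_nonneg]
  have heq : b ^ 2 + μ ^ 2 * a ^ 2 + (2 * μ / 3 - 4 / t) * (a * b) + a ^ 2 / (2 * t ^ 2)
      - μ / 6 * (a * b + μ / 3 * a ^ 2 - a ^ 2 / (2 * t)) =
      (t ^ 2 * b ^ 2 + 17 / 18 * μ ^ 2 * t ^ 2 * a ^ 2 + μ / 2 * t ^ 2 * (a * b)
        - 4 * t * (a * b) + a ^ 2 / 2 + μ / 12 * t * a ^ 2) / t ^ 2 := by
    field_simp
    ring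
  rw [heq]
  apply div_nonneg _ (sq_nonneg t)
  have h6 : 6 ≤ μ * t := by linarith
  nlinarith [sq_nonneg (t * b - μ * t * a / 12), mul_nonneg (sub_nonneg.2 h6)
      (mul_nonneg (mul_nonneg ht.le ha.le) hb0.le), sq_nonneg (t * a),
      mul_pos ht ht, mul_pos ha hb0, sq_nonneg (μ * t * a)]

-- positivity of W
lemma chetaev_pos (μ t a b : ℝ) (hμ : 0 < μ) (ht : 0 < t) (hμt : 6 + μ ≤ μ * t)
    (ha : 0 < a) (hb : μ * a / 3 < b) :
    0 < a * b + μ / 3 * a ^ 2 - a ^ 2 / (2 * t) := by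
  have hb0 : 0 < b := lt_of_le_of_lt (by positivity) hb
  have h1 : a ^ 2 / (2 * t) ≤ μ * a ^ 2 / 12 := by
    rw [div_le_div_iff₀ (by linarith) (by norm_num)]
    nlinarith [sq_nonneg a]
  nlinarith [mul_pos ha hb0, sq_nonneg a, mul_pos ha ha]


lemma chetaev_inv (μ t₀ : ℝ) (hμ : 0 < μ) (ht₀ : 6 / μ + 1 ≤ t₀)
    (ξ ζ : ℝ → ℝ)
    (hξ : ∀ t, t₀ ≤ t → HasDerivAt ξ (ζ t) t)
    (hζ : ∀ t, t₀ ≤ t → HasDerivAt ζ (-(3 / t) * ζ t + μ ^ 2 * ξ t) t)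
    (hinit₁ : 0 < ξ t₀) (hinit₂ : μ * ξ t₀ / 3 < ζ t₀) :
    ∀ t, t₀ ≤ t → 0 < ξ t ∧ μ * ξ t / 3 < ζ t := by
  have ht0pos : (0 : ℝ) < t₀ := lt_of_lt_of_le (by positivity) ht₀
  have hμt : ∀ t, t₀ ≤ t → 6 + μ ≤ μ * t := by
    intro t ht
    have h1 : μ * (6 / μ + 1) ≤ μ * t := by
      apply mul_le_mul_of_nonneg_left (le_trans ht₀ ht) hμ.le
    rw [mul_add, mul_div_cancel₀ _ (ne_of_gt hμ), mul_one] at h1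
    exact h1
  have htpos : ∀ t, t₀ ≤ t → 0 < t := fun t ht => lt_of_lt_of_le ht0pos ht
  set m : ℝ → ℝ := fun s => min (ξ s) (ζ s - μ * ξ s / 3) with hm
  have hmc : ∀ s, t₀ ≤ s → ContinuousAt m s := by
    intro s hs
    exact ((hξ s hs).continuousAt).min
      (((hζ s hs).continuousAt).sub (((hξ s hs).continuousAt.const_mul μ).div_const 3))
  have hm0 : 0 < m t₀ := lt_min hinit₁ (by linarith)
  by_contra hcon
  push_neg at hcon
  obtain ⟨t₁, ht₁, hbad⟩ := hcon
  have hm₁ : m t₁ ≤ 0 := by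
    by_cases h : 0 < ξ t₁
    · exact min_le_of_right_le (by linarith [hbad h])
    · exact min_le_of_left_le (not_lt.1 h)
  set S := {s : ℝ | t₀ ≤ s ∧ m s ≤ 0} with hS
  have hSne : S.Nonempty := ⟨t₁, ht₁, hm₁⟩
  have hSbd : BddBelow S := ⟨t₀, fun s hs => hs.1⟩
  set τ := sInf S with hτ
  have hτ₀ : t₀ ≤ τ := le_csInf hSne fun s hs => hs.1
  have hmτ : m τ ≤ 0 := by
    obtain ⟨u, -, hu, huS⟩ := exists_seq_tendsto_sInf hSne hSbd
    exact le_of_tendsto ((hmc τ hτ₀).tendsto.comp hu)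
      (Eventually.of_forall fun n => (huS n).2)
  have hτgt : t₀ < τ := hτ₀.lt_of_ne (fun h => by rw [← h] at hmτ; linarith)
  have hpos : ∀ s, t₀ ≤ s → s < τ → 0 < m s := by
    intro s hs hsτ
    by_contra h
    exact absurd (csInf_le hSbd ⟨hs, not_lt.1 h⟩) (not_le.2 hsτ)
  have hmτnn : 0 ≤ m τ := by
    refine ge_of_tendsto ((hmc τ hτ₀).continuousWithinAt :
        Tendsto m (nhdsWithin τ (Iio τ)) (nhds (m τ))) ?_
    filter_upwards [Ioo_mem_nhdsLT_of_mem (show τ ∈ Ioc t₀ τ from ⟨hτgt, le_refl τ⟩)]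
      with x hx
    exact (hpos x hx.1.le hx.2).le
  have hIcc : ∀ s ∈ Icc t₀ τ, 0 ≤ m s := by
    intro s hs
    rcases lt_or_eq_of_le hs.2 with h | h
    · exact (hpos s hs.1 h).le
    · rw [h]; exact hmτnn
  have hξnn : ∀ s ∈ Icc t₀ τ, 0 ≤ ξ s := fun s hs =>
    le_trans (hIcc s hs) (min_le_left _ _)
  have hζnn : ∀ s ∈ Icc t₀ τ, μ * ξ s / 3 ≤ ζ s := fun s hs => by
    have := le_trans (hIcc s hs) (min_le_right _ _); linarith
  -- ξ is monotone on [t₀, τ]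
  have hmono : MonotoneOn ξ (Icc t₀ τ) := by
    apply monotoneOn_of_hasDerivWithinAt_nonneg (convex_Icc _ _)
      (fun s hs => (hξ s hs.1).continuousAt.continuousWithinAt)
      (f' := ζ) ?_ ?_
    · intro x hx
      rw [interior_Icc] at hx
      exact (hξ x hx.1.le).hasDerivWithinAt
    · intro x hx
      rw [interior_Icc] at hx
      have h1 := hξnn x ⟨hx.1.le, hx.2.le⟩
      have h2 := hζnn x ⟨hx.1.le, hx.2.le⟩
      nlinarith
  have hξτ : 0 < ξ τ :=
    lt_of_lt_of_le hinit₁ (hmono (left_mem_Icc.2 hτ₀) (right_mem_Icc.2 hτ₀) hτ₀)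
  -- Gronwall-type function for u = ζ - μξ/3
  set g : ℝ → ℝ := fun s => Real.exp (5 * μ / 6 * s) * (ζ s - μ * ξ s / 3) with hg
  have hgd : ∀ s, t₀ ≤ s → HasDerivAt g
      (Real.exp (5 * μ / 6 * s) * ((μ / 2 - 3 / s) * ζ s + 13 * μ ^ 2 / 18 * ξ s)) s := by
    intro s hs
    have he : HasDerivAt (fun x : ℝ => Real.exp (5 * μ / 6 * x))
        (Real.exp (5 * μ / 6 * s) * (5 * μ / 6 * 1)) s :=
      (((hasDerivAt_id s).const_mul (5 * μ / 6))).exp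
    have hu : HasDerivAt (fun x => ζ x - μ * ξ x / 3)
        ((-(3 / s) * ζ s + μ ^ 2 * ξ s) - μ * ζ s / 3) s :=
      (hζ s hs).sub (((hξ s hs).const_mul μ).div_const 3)
    have := he.mul hu
    refine this.congr_deriv ?_
    ring
  have hgmono : MonotoneOn g (Icc t₀ τ) := by
    apply monotoneOn_of_hasDerivWithinAt_nonneg (convex_Icc _ _)
      (f' := fun s => Real.exp (5 * μ / 6 * s) * ((μ / 2 - 3 / s) * ζ s + 13 * μ ^ 2 / 18 * ξ s))
      (fun s hs => (hgd s hs.1).continuousAt.continuousWithinAt) ?_ ?_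
    · intro x hx
      rw [interior_Icc] at hx
      exact (hgd x hx.1.le).hasDerivWithinAt
    · intro x hx
      rw [interior_Icc] at hx
      have hx0 : 0 < x := htpos x hx.1.le
      have h1 := hξnn x ⟨hx.1.le, hx.2.le⟩
      have h2 := hζnn x ⟨hx.1.le, hx.2.le⟩
      have h3 : 3 / x ≤ μ / 2 := by
        rw [div_le_div_iff₀ hx0 (by norm_num)]
        have := hμt x hx.1.le
        linarith
      have hζ0 : 0 ≤ ζ x := le_trans (by positivity) h2
      have : 0 ≤ (μ / 2 - 3 / x) * ζ x + 13 * μ ^ 2 / 18 * ξ x := by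
        have := mul_nonneg (sub_nonneg.2 h3) hζ0
        nlinarith
      exact mul_nonneg (Real.exp_pos _).le this
  have hgτ : g t₀ ≤ g τ := hgmono (left_mem_Icc.2 hτ₀) (right_mem_Icc.2 hτ₀) hτ₀
  have hgt₀ : 0 < g t₀ := by
    have : 0 < ζ t₀ - μ * ξ t₀ / 3 := by linarith
    positivity
  have huτ : 0 < ζ τ - μ * ξ τ / 3 := by
    by_contra h
    have h2 : g τ ≤ 0 :=
      mul_nonpos_of_nonneg_of_nonpos (Real.exp_pos _).le (not_lt.1 h)
    linarith
  have : 0 < m τ := lt_min hξτ huτ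
  linarith

/-- Chetaev analysis of the modal system `ξ' = ζ`, `ζ' = -(3/t) ζ + μ² ξ`
(eigenvalue `λ = -μ²`) for `μ > 0` and `t₀ ≥ 6/μ + 1`. If the initial data lies in the
region `Ω = {ξ > 0, ζ > μξ/3}`, then (a) the trajectory stays in `Ω`; (b) the Chetaev
function `W(t) = ξζ + (μ/3)ξ² - ξ²/(2t)` is positive and satisfies `W' ≥ (μ/6) W`, hence
`W(t) ≥ W(t₀) e^{(μ/6)(t - t₀)}`; (c) `ξ(t) → ∞`. -/
theorem stmt_17 (μ t₀ : ℝ) (hμ : 0 < μ) (ht₀ : 6 / μ + 1 ≤ t₀)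
    (ξ ζ : ℝ → ℝ)
    (hξ : ∀ t, t₀ ≤ t → HasDerivAt ξ (ζ t) t)
    (hζ : ∀ t, t₀ ≤ t → HasDerivAt ζ (-(3 / t) * ζ t + μ ^ 2 * ξ t) t)
    (hinit₁ : 0 < ξ t₀) (hinit₂ : μ * ξ t₀ / 3 < ζ t₀) :
    (∀ t, t₀ ≤ t → 0 < ξ t ∧ μ * ξ t / 3 < ζ t) ∧
    (∀ t, t₀ ≤ t → 0 < ξ t * ζ t + μ / 3 * ξ t ^ 2 - ξ t ^ 2 / (2 * t)) ∧
    (∃ W' : ℝ → ℝ,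
      (∀ t, t₀ ≤ t → HasDerivAt
        (fun s => ξ s * ζ s + μ / 3 * ξ s ^ 2 - ξ s ^ 2 / (2 * s)) (W' t) t) ∧
      (∀ t, t₀ ≤ t →
        μ / 6 * (ξ t * ζ t + μ / 3 * ξ t ^ 2 - ξ t ^ 2 / (2 * t)) ≤ W' t)) ∧
    (∀ t, t₀ ≤ t →
      (ξ t₀ * ζ t₀ + μ / 3 * ξ t₀ ^ 2 - ξ t₀ ^ 2 / (2 * t₀)) * Real.exp (μ / 6 * (t - t₀))
        ≤ ξ t * ζ t + μ / 3 * ξ t ^ 2 - ξ t ^ 2 / (2 * t)) ∧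
    Tendsto ξ atTop atTop := by
  have hΩ : ∀ t, t₀ ≤ t → 0 < ξ t ∧ μ * ξ t / 3 < ζ t :=
    chetaev_inv μ t₀ hμ ht₀ ξ ζ hξ hζ hinit₁ hinit₂
  refine ⟨hΩ, ?_⟩
  have ht0pos : (0 : ℝ) < t₀ := lt_of_lt_of_le (by positivity) ht₀
  have htpos : ∀ t, t₀ ≤ t → 0 < t := fun t ht => lt_of_lt_of_le ht0pos ht
  have hμt : ∀ t, t₀ ≤ t → 6 + μ ≤ μ * t := by
    intro t ht
    have h1 : μ * (6 / μ + 1) ≤ μ * t :=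
      mul_le_mul_of_nonneg_left (le_trans ht₀ ht) hμ.le
    rw [mul_add, mul_div_cancel₀ _ (ne_of_gt hμ), mul_one] at h1
    exact h1
  set W' : ℝ → ℝ := fun t =>
    ζ t ^ 2 + μ ^ 2 * ξ t ^ 2 + (2 * μ / 3 - 4 / t) * (ξ t * ζ t) + ξ t ^ 2 / (2 * t ^ 2)
    with hW'def
  have hWd : ∀ t, t₀ ≤ t → HasDerivAt
      (fun s => ξ s * ζ s + μ / 3 * ξ s ^ 2 - ξ s ^ 2 / (2 * s)) (W' t) t := by
    intro t ht
    have ht0 := htpos t ht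
    have h1 : HasDerivAt (fun s => ξ s * ζ s)
        (ζ t * ζ t + ξ t * (-(3 / t) * ζ t + μ ^ 2 * ξ t)) t := (hξ t ht).mul (hζ t ht)
    have h2 : HasDerivAt (fun s => μ / 3 * ξ s ^ 2)
        (μ / 3 * ((2 : ℕ) * ξ t ^ 1 * ζ t)) t := ((hξ t ht).pow 2).const_mul (μ / 3)
    have hd : HasDerivAt (fun s : ℝ => 2 * s) (2 * 1) t := (hasDerivAt_id t).const_mul 2
    have h3 : HasDerivAt (fun s => ξ s ^ 2 / (2 * s))
        (((2 : ℕ) * ξ t ^ 1 * ζ t * (2 * t) - ξ t ^ 2 * (2 * 1)) / (2 * t) ^ 2) t :=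
      ((hξ t ht).pow 2).div hd (by positivity)
    have := (h1.add h2).sub h3
    refine this.congr_deriv ?_
    rw [hW'def]
    field_simp
    ring
  have hWineq : ∀ t, t₀ ≤ t →
      μ / 6 * (ξ t * ζ t + μ / 3 * ξ t ^ 2 - ξ t ^ 2 / (2 * t)) ≤ W' t := by
    intro t ht
    exact chetaev_key μ t (ξ t) (ζ t) hμ (htpos t ht) (hμt t ht) (hΩ t ht).1 (hΩ t ht).2
  have hWpos : ∀ t, t₀ ≤ t → 0 < ξ t * ζ t + μ / 3 * ξ t ^ 2 - ξ t ^ 2 / (2 * t) :=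
    fun t ht => chetaev_pos μ t (ξ t) (ζ t) hμ (htpos t ht) (hμt t ht) (hΩ t ht).1 (hΩ t ht).2
  refine ⟨hWpos, ⟨W', hWd, hWineq⟩, ?_, ?_⟩
  · -- exponential lower bound
    set G : ℝ → ℝ := fun s =>
      (ξ s * ζ s + μ / 3 * ξ s ^ 2 - ξ s ^ 2 / (2 * s)) * Real.exp (-(μ / 6 * (s - t₀)))
      with hGdef
    have hGd : ∀ s, t₀ ≤ s → HasDerivAt G
        ((W' s - μ / 6 * (ξ s * ζ s + μ / 3 * ξ s ^ 2 - ξ s ^ 2 / (2 * s))) *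
          Real.exp (-(μ / 6 * (s - t₀)))) s := by
      intro s hs
      have he : HasDerivAt (fun x : ℝ => Real.exp (-(μ / 6 * (x - t₀))))
          (Real.exp (-(μ / 6 * (s - t₀))) * (-(μ / 6 * 1))) s :=
        ((((hasDerivAt_id s).sub_const t₀)).const_mul (μ / 6)).neg.exp
      have := (hWd s hs).mul he
      refine this.congr_deriv ?_
      ring
    have hGmono : MonotoneOn G (Ici t₀) := by
      apply monotoneOn_of_hasDerivWithinAt_nonneg (convex_Ici _)
        (f' := fun s => (W' s - μ / 6 * (ξ s * ζ s + μ / 3 * ξ s ^ 2 - ξ s ^ 2 / (2 * s))) *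
          Real.exp (-(μ / 6 * (s - t₀))))
        (fun s hs => (hGd s hs).continuousAt.continuousWithinAt) ?_ ?_
      · intro x hx
        rw [interior_Ici] at hx
        exact (hGd x hx.le).hasDerivWithinAt
      · intro x hx
        rw [interior_Ici] at hx
        exact mul_nonneg (sub_nonneg.2 (hWineq x hx.le)) (Real.exp_pos _).le
    intro t ht
    have h1 : G t₀ ≤ G t := hGmono (self_mem_Ici) (mem_Ici.2 ht) ht
    rw [hGdef] at h1
    simp only [sub_self, mul_zero, neg_zero, Real.exp_zero, mul_one] at h1
    have h2 : Real.exp (-(μ / 6 * (t - t₀))) = (Real.exp (μ / 6 * (t - t₀)))⁻¹ :=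
      Real.exp_neg _
    rw [h2, ← div_eq_mul_inv, le_div_iff₀ (Real.exp_pos _)] at h1
    exact h1
  · -- ξ → ∞
    have hmono : MonotoneOn ξ (Ici t₀) := by
      apply monotoneOn_of_hasDerivWithinAt_nonneg (convex_Ici _) (f' := ζ)
        (fun s hs => (hξ s hs).continuousAt.continuousWithinAt) ?_ ?_
      · intro x hx
        rw [interior_Ici] at hx
        exact (hξ x hx.le).hasDerivWithinAt
      · intro x hx
        rw [interior_Ici] at hx
        have h := hΩ x hx.le
        nlinarith [h.1, h.2]
    set c := μ * ξ t₀ / 3 with hc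
    have hcpos : 0 < c := by positivity
    have hlin : MonotoneOn (fun s => ξ s - c * s) (Ici t₀) := by
      apply monotoneOn_of_hasDerivWithinAt_nonneg (convex_Ici _)
        (f' := fun s => ζ s - c)
        (fun s hs => ((hξ s hs).sub ((hasDerivAt_id s).const_mul c)).continuousAt.continuousWithinAt)
        ?_ ?_
      · intro x hx
        rw [interior_Ici] at hx
        have := ((hξ x hx.le).sub ((hasDerivAt_id x).const_mul c))
        refine this.hasDerivWithinAt.congr_deriv ?_
        ring
      · intro x hx
        rw [interior_Ici] at hx
        have h := hΩ x hx.le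
        have h2 : ξ t₀ ≤ ξ x := hmono self_mem_Ici (mem_Ici.2 hx.le) hx.le
        rw [hc]
        nlinarith [h.2]
    have hbound : ∀ t, t₀ ≤ t → ξ t₀ + c * (t - t₀) ≤ ξ t := by
      intro t ht
      have := hlin self_mem_Ici (mem_Ici.2 ht) ht
      simp only at this
      nlinarith
    have hlow : Tendsto (fun t => ξ t₀ + c * (t - t₀)) atTop atTop := by
      apply tendsto_atTop_add_const_left
      apply Tendsto.const_mul_atTop hcpos
      exact tendsto_atTop_add_const_right _ _ tendsto_id
    apply tendsto_atTop_mono' atTop _ hlow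
    filter_upwards [eventually_ge_atTop t₀] with t ht
    exact hbound t ht
end
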